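/- arXiv:2504.07038 — 3 statements merged into one kernel-verified Lean document; each statement's English description precedes it below -/
import Mathlib

section
/- Weak regularity lemma (Lemma 5.1 of the paper, after Tao): Let H be a real or complex Hilbert space and S a set of vectors of H each of norm at most 1. Then for every f ∈ H with ‖f‖_H ≤ 1 and every 0 < ε ≤ 1 there is a decomposition f = f_str + f_psd such that f_str is (⌈1/ε²⌉, 1/ε)-structured with respect to S, f_psd is ε-pseudorandom with respect to S, and ‖f_psd‖_H ≤ ‖f‖_H. -/
open scoped BigOperators

/-- A vector `f` in a Hilbert space is `(M, K)`-structured with respect to a set `S`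
of structured vectors if it is a linear combination of at most `M` vectors of `S`
with scalar coefficients of norm at most `K`. -/
def IsStructured {𝕜 H : Type*} [RCLike 𝕜] [NormedAddCommGroup H] [InnerProductSpace 𝕜 H]
    (S : Set H) (M : ℕ) (K : ℝ) (f : H) : Prop :=
  ∃ (M' : ℕ) (c : Fin M' → 𝕜) (v : Fin M' → H),
    M' ≤ M ∧ (∀ i, v i ∈ S) ∧ (∀ i, ‖c i‖ ≤ K) ∧ f = ∑ i, c i • v i

/-- A vector `f` is `ε`-pseudorandom with respect to `S` if `|⟨f, v⟩| ≤ ε` for all `v ∈ S`. -/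
def IsPseudorandom {𝕜 H : Type*} [RCLike 𝕜] [NormedAddCommGroup H] [InnerProductSpace 𝕜 H]
    (S : Set H) (ε : ℝ) (f : H) : Prop :=
  ∀ v ∈ S, ‖(inner 𝕜 f v : 𝕜)‖ ≤ ε

lemma weak_reg_aux {𝕜 H : Type*} [RCLike 𝕜] [NormedAddCommGroup H]
    [InnerProductSpace 𝕜 H] (S : Set H) (hS : ∀ v ∈ S, ‖v‖ ≤ 1)
    (ε : ℝ) (hε0 : 0 < ε) :
    ∀ n : ℕ, ∀ g : H, ‖g‖ ≤ 1 → ‖g‖ ^ 2 ≤ n * ε ^ 2 →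
      ∃ fstr fpsd : H, g = fstr + fpsd ∧
        IsStructured (𝕜 := 𝕜) S n (1 / ε) fstr ∧
        IsPseudorandom (𝕜 := 𝕜) S ε fpsd ∧ ‖fpsd‖ ≤ ‖g‖ := by
  intro n
  induction n with
  | zero =>
    intro g hg1 hgE
    have hg0 : g = 0 := by
      have : ‖g‖ ^ 2 ≤ 0 := by simpa using hgE
      have := sq_nonneg ‖g‖
      have : ‖g‖ = 0 := by nlinarith
      simpa using this
    refine ⟨0, g, by simp, ⟨0, ![], ![], le_refl _, by simp, by simp, by simp⟩, ?_, le_refl _⟩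
    intro v hv
    simp [hg0, hε0.le]
  | succ n ih =>
    intro g hg1 hgE
    by_cases hpr : IsPseudorandom (𝕜 := 𝕜) S ε g
    · exact ⟨0, g, by simp, ⟨0, ![], ![], by simp, by simp, by simp, by simp⟩, hpr, le_refl _⟩
    · simp only [IsPseudorandom, not_forall] at hpr
      obtain ⟨v, hvS, hbig⟩ := hpr
      push_neg at hbig
      have hvnorm : ‖(inner 𝕜 g v : 𝕜)‖ ≤ ‖g‖ * ‖v‖ := norm_inner_le_norm _ _
      have hv1 : ‖v‖ ≤ 1 := hS v hvS
      have hεv : ε < ‖v‖ := by nlinarith [hbig, norm_nonneg (inner 𝕜 g v : 𝕜), norm_nonneg v]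
      have hvpos : (0:ℝ) < ‖v‖ := hε0.trans hεv
      set c : 𝕜 := (inner 𝕜 v g : 𝕜) / ((‖v‖ : 𝕜) ^ 2) with hc
      set g' : H := g - c • v with hg'
      have hinner_vg : ‖(inner 𝕜 v g : 𝕜)‖ = ‖(inner 𝕜 g v : 𝕜)‖ := norm_inner_symm v g
      have hvv : (inner 𝕜 v v : 𝕜) = (‖v‖ : 𝕜) ^ 2 := by
        rw [inner_self_eq_norm_sq_to_K]
      have hortho : (inner 𝕜 v g' : 𝕜) = 0 := by
        have hvne : ((‖v‖ : ℝ) : 𝕜) ≠ 0 := by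
          exact_mod_cast (RCLike.ofReal_ne_zero).mpr (ne_of_gt hvpos)
        rw [hg', inner_sub_right, inner_smul_right, hvv, hc]
        field_simp
        simp
      have hortho' : (inner 𝕜 g' v : 𝕜) = 0 := by
        simpa using congrArg (starRingEnd 𝕜) hortho
      -- Pythagoras: ‖g‖² = ‖g'‖² + ‖c•v‖²
      have hpyth : ‖g‖ ^ 2 = ‖g'‖ ^ 2 + ‖c • v‖ ^ 2 := by
        have : g = g' + c • v := by rw [hg']; abel
        rw [this, @norm_add_sq 𝕜, inner_smul_right, hortho']
        simp
      have hcnorm : ‖c‖ = ‖(inner 𝕜 g v : 𝕜)‖ / ‖v‖ ^ 2 := by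
        rw [hc, norm_div, hinner_vg]
        congr 1
        simp [abs_of_nonneg (norm_nonneg v)]
      have hcv : ε < ‖c • v‖ := by
        rw [norm_smul, hcnorm]
        rw [div_mul_eq_mul_div]
        rw [lt_div_iff₀ (by positivity)]
        nlinarith [mul_lt_mul_of_pos_right hbig hvpos,
          mul_le_mul_of_nonneg_left hv1 (mul_nonneg hε0.le hvpos.le)]
      have hcle : ‖c‖ ≤ 1 / ε := by
        rw [hcnorm, div_le_div_iff₀ (by positivity) hε0]
        nlinarith [mul_le_mul_of_nonneg_right hvnorm hε0.le,
          mul_le_mul_of_nonneg_right (mul_le_mul_of_nonneg_right hg1 (norm_nonneg v)) hε0.le,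
          mul_le_mul_of_nonneg_left hεv.le (norm_nonneg v)]
      have hg'norm2 : ‖g'‖ ^ 2 ≤ ‖g‖ ^ 2 - ε ^ 2 := by nlinarith [hpyth, hcv, hε0]
      have hg'le : ‖g'‖ ≤ ‖g‖ := by nlinarith [norm_nonneg g', norm_nonneg g]
      have hg'1 : ‖g'‖ ≤ 1 := hg'le.trans hg1
      have hg'E : ‖g'‖ ^ 2 ≤ n * ε ^ 2 := by
        push_cast [Nat.cast_succ] at hgE ⊢
        nlinarith
      obtain ⟨fstr, fpsd, hdec, ⟨M', c', v', hM', hv'S, hc', hsum⟩, hpsd, hle⟩ :=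
        ih g' hg'1 hg'E
      refine ⟨c • v + fstr, fpsd, ?_, ?_, hpsd, hle.trans hg'le⟩
      · rw [add_assoc, ← hdec, hg']; abel
      · refine ⟨M' + 1, Fin.cons c c', Fin.cons v v', by omega, ?_, ?_, ?_⟩
        · intro i; refine Fin.cases ?_ ?_ i <;> simp [hvS, hv'S]
        · intro i
          refine Fin.cases ?_ ?_ i
          · simpa using hcle
          · intro j; simpa using hc' j
        · rw [Fin.sum_univ_succ]
          simp [hsum]

/-- Weak regularity lemma (Tao): every vector of norm at most `1` decomposes as a
`(⌈1/ε²⌉, 1/ε)`-structured part plus an `ε`-pseudorandom part of no larger norm. -/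
theorem weak_regularity_lemma {𝕜 H : Type*} [RCLike 𝕜] [NormedAddCommGroup H]
    [InnerProductSpace 𝕜 H] (S : Set H) (hS : ∀ v ∈ S, ‖v‖ ≤ 1)
    (f : H) (hf : ‖f‖ ≤ 1) (ε : ℝ) (hε0 : 0 < ε) (hε1 : ε ≤ 1) :
    ∃ fstr fpsd : H, f = fstr + fpsd ∧
      IsStructured (𝕜 := 𝕜) S ⌈1 / ε ^ 2⌉₊ (1 / ε) fstr ∧
      IsPseudorandom (𝕜 := 𝕜) S ε fpsd ∧
      ‖fpsd‖ ≤ ‖f‖ := by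
  have key : ‖f‖ ^ 2 ≤ (⌈1 / ε ^ 2⌉₊ : ℝ) * ε ^ 2 := by
    have h1 : (1 : ℝ) / ε ^ 2 ≤ ⌈1 / ε ^ 2⌉₊ := Nat.le_ceil _
    have h2 : (1 : ℝ) ≤ (⌈1 / ε ^ 2⌉₊ : ℝ) * ε ^ 2 := by
      have h3 := mul_le_mul_of_nonneg_right h1 (by positivity : (0:ℝ) ≤ ε ^ 2)
      rwa [div_mul_cancel₀ 1 (by positivity : (ε ^ 2 : ℝ) ≠ 0)] at h3
    nlinarith [norm_nonneg f]
  exact weak_reg_aux S hS ε hε0 _ f hf key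
end

section
/- Strong regularity lemma (Lemma 5.2 of the paper, after Tao): Let H be a real or complex Hilbert space and S a set of vectors of H each of norm at most 1. For every ε > 0 and every function 𝓕 : ℕ_{>0} → ℝ_{>0} there exists a constant M₀ = M₀(𝓕, ε) such that every f ∈ H with ‖f‖_H ≤ 1 admits a decomposition f = f_str + f_psd + f_sml, for some positive integer M ≤ M₀, where f_str is (M, M)-structured with respect to S, ‖f_sml‖_H ≤ ε, f_psd is 1/𝓕(M)-pseudorandom with respect to S, and ‖f_psd‖_H ≤ ‖f‖_H. -/
open scoped BigOperators
open Submodule Set Finset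

section FinSet

variable {α : Type*}

lemma fin_snoc_eq_of_lt {m : ℕ} (v : Fin m → α) (a : α) (k : Fin (m + 1)) (hkm : (k : ℕ) < m) :
    (Fin.snoc v a : Fin (m + 1) → α) k = v ⟨k, hkm⟩ := by
  have hcast : k = Fin.castSucc ⟨k, hkm⟩ := by ext; rfl
  conv_lhs => rw [hcast]
  exact Fin.snoc_castSucc _ _ _

lemma fin_snoc_image_lt_last {m : ℕ} (v : Fin m → α) (a : α) :
    (Fin.snoc v a : Fin (m + 1) → α) '' {k | k < Fin.last m} = Set.range v := by
  ext x
  constructor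
  · rintro ⟨k, hk, rfl⟩
    have hkm : (k : ℕ) < m := hk
    exact ⟨⟨k, hkm⟩, (fin_snoc_eq_of_lt v a k hkm).symm⟩
  · rintro ⟨j, rfl⟩
    exact ⟨Fin.castSucc j, Fin.castSucc_lt_last j, Fin.snoc_castSucc _ _ _⟩

lemma fin_snoc_image_lt_castSucc {m : ℕ} (v : Fin m → α) (a : α) (j : Fin m) :
    (Fin.snoc v a : Fin (m + 1) → α) '' {k | k < Fin.castSucc j} = v '' {k | k < j} := by
  ext x
  constructor
  · rintro ⟨k, hk, rfl⟩
    have hkj : (k : ℕ) < (j : ℕ) := by simpa [Fin.lt_def] using hk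
    have hkm : (k : ℕ) < m := lt_of_lt_of_le hkj (j.2.le)
    exact ⟨⟨k, hkm⟩, Fin.lt_def.mpr hkj, (fin_snoc_eq_of_lt v a k hkm).symm⟩
  · rintro ⟨k, hk, rfl⟩
    exact ⟨Fin.castSucc k, Fin.castSucc_lt_castSucc_iff.mpr hk, Fin.snoc_castSucc _ _ _⟩

lemma fin_comp_castSucc_image_lt {m : ℕ} (v : Fin (m + 1) → α) (j : Fin m) :
    (v ∘ Fin.castSucc) '' {k | k < j} = v '' {k | k < Fin.castSucc j} := by
  ext x
  constructor
  · rintro ⟨k, hk, rfl⟩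
    exact ⟨Fin.castSucc k, Fin.castSucc_lt_castSucc_iff.mpr hk, rfl⟩
  · rintro ⟨k, hk, rfl⟩
    have hkj : (k : ℕ) < (j : ℕ) := by simpa [Fin.lt_def] using hk
    have hkm : (k : ℕ) < m := lt_of_lt_of_le hkj (j.2.le)
    have hcast : k = Fin.castSucc ⟨k, hkm⟩ := by ext; rfl
    exact ⟨⟨k, hkm⟩, Fin.lt_def.mpr hkj, by rw [Function.comp_apply, ← hcast]⟩

lemma fin_image_lt_last_eq_range_comp {m : ℕ} (v : Fin (m + 1) → α) :
    v '' {k | k < Fin.last m} = Set.range (v ∘ Fin.castSucc) := by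
  ext x
  constructor
  · rintro ⟨k, hk, rfl⟩
    have hkm : (k : ℕ) < m := hk
    have hcast : k = Fin.castSucc ⟨k, hkm⟩ := by ext; rfl
    exact ⟨⟨k, hkm⟩, by rw [Function.comp_apply, ← hcast]⟩
  · rintro ⟨j, rfl⟩
    exact ⟨Fin.castSucc j, Fin.castSucc_lt_last j, rfl⟩

end FinSet
section Proj

variable {𝕜 H : Type*} [RCLike 𝕜] [NormedAddCommGroup H] [InnerProductSpace 𝕜 H]

local notation "⟪" x ", " y "⟫" => @inner 𝕜 _ _ x y

/-- A family of vectors is `δ`-separated if each vector has distance at least `δ`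
from the span of the previous ones. -/
def SepFam (𝕜 : Type*) {H : Type*} [RCLike 𝕜] [NormedAddCommGroup H] [InnerProductSpace 𝕜 H]
    {m : ℕ} (v : Fin m → H) (δ : ℝ) : Prop :=
  ∀ j : Fin m, ∀ w ∈ Submodule.span 𝕜 (v '' {k | k < j}), δ ≤ ‖v j - w‖

lemma SepFam.mono {m : ℕ} {v : Fin m → H} {δ δ' : ℝ} (h : SepFam 𝕜 v δ) (hδ : δ' ≤ δ) :
    SepFam 𝕜 v δ' := fun j w hw => le_trans hδ (h j w hw)

instance spanFinRangeHasOrtho {m : ℕ} {v : Fin m → H} :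
    HasOrthogonalProjection (Submodule.span 𝕜 (Set.range v)) := by
  haveI : FiniteDimensional 𝕜 (Submodule.span 𝕜 (Set.range v)) :=
    FiniteDimensional.span_of_finite 𝕜 (Set.finite_range v)
  infer_instance

lemma proj_norm_sq (K : Submodule 𝕜 H) [HasOrthogonalProjection K] (f : H) :
    ‖(orthogonalProjection K f : H)‖ ^ 2 + ‖f - (orthogonalProjection K f : H)‖ ^ 2 = ‖f‖ ^ 2 := by
  have h := orthogonalProjectionFn_norm_sq K f
  simp only [orthogonalProjectionFn_eq] at h
  nlinarith [h]

lemma proj_norm_le (K : Submodule 𝕜 H) [HasOrthogonalProjection K] (f : H) :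
    ‖(orthogonalProjection K f : H)‖ ≤ ‖f‖ := by
  have h := proj_norm_sq K f
  nlinarith [norm_nonneg (f - (orthogonalProjection K f : H)), norm_nonneg f,
    norm_nonneg (orthogonalProjection K f : H)]

lemma residual_norm_le (K : Submodule 𝕜 H) [HasOrthogonalProjection K] (f : H) :
    ‖f - (orthogonalProjection K f : H)‖ ≤ ‖f‖ := by
  have h := proj_norm_sq K f
  nlinarith [norm_nonneg (f - (orthogonalProjection K f : H)), norm_nonneg f,
    norm_nonneg (orthogonalProjection K f : H)]

lemma energy_increment {K K' : Submodule 𝕜 H} [HasOrthogonalProjection K]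
    [HasOrthogonalProjection K'] (hle : K ≤ K') {f v₀ : H} (hv₀ : v₀ ∈ K') (hv₀n : ‖v₀‖ ≤ 1)
    {δ : ℝ} (hδ : 0 ≤ δ)
    (h : δ < ‖⟪f - (orthogonalProjection K f : H), v₀⟫‖) :
    ‖(orthogonalProjection K f : H)‖ ^ 2 + δ ^ 2 ≤ ‖(orthogonalProjection K' f : H)‖ ^ 2 := by
  set u : H := f - (orthogonalProjection K f : H) with hu
  set t : 𝕜 := ⟪u, v₀⟫ with ht
  set y : H := (orthogonalProjection K f : H) + (starRingEnd 𝕜) t • v₀ with hy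
  have hyK' : y ∈ K' := K'.add_mem (hle (orthogonalProjection K f).2)
    (K'.smul_mem _ hv₀)
  have hmin : ‖f - (orthogonalProjection K' f : H)‖ ≤ ‖f - y‖ := by
    rw [show (orthogonalProjection K' f : H) = K'.starProjection f from rfl,
      Submodule.starProjection_minimal]
    exact ciInf_le ⟨0, by rintro b ⟨x, rfl⟩; exact norm_nonneg _⟩ (⟨y, hyK'⟩ : K')
  have hfy : f - y = u - (starRingEnd 𝕜) t • v₀ := by rw [hu, hy]; abel
  have hexp : ‖f - y‖ ^ 2 = ‖u‖ ^ 2 - 2 * ‖t‖ ^ 2 + ‖t‖ ^ 2 * ‖v₀‖ ^ 2 := by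
    rw [hfy, @norm_sub_sq 𝕜]
    have h1 : ⟪u, (starRingEnd 𝕜) t • v₀⟫ = (starRingEnd 𝕜) t * t := by
      rw [inner_smul_right]
    have h2 : RCLike.re ((starRingEnd 𝕜) t * t) = ‖t‖ ^ 2 := by
      rw [RCLike.conj_mul, ← RCLike.ofReal_pow, RCLike.ofReal_re]
    rw [h1, h2, norm_smul]
    rw [RCLike.norm_conj]
    ring
  have hKpyth := proj_norm_sq K f
  have hK'pyth := proj_norm_sq K' f
  have hδt : δ ^ 2 < ‖t‖ ^ 2 := by
    have := norm_nonneg t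
    nlinarith
  have hv2 : ‖t‖ ^ 2 * ‖v₀‖ ^ 2 ≤ ‖t‖ ^ 2 := by
    have h01 : ‖v₀‖ ^ 2 ≤ 1 := by nlinarith [norm_nonneg v₀]
    nlinarith [sq_nonneg ‖t‖]
  have hmin2 : ‖f - (orthogonalProjection K' f : H)‖ ^ 2 ≤ ‖f - y‖ ^ 2 := by
    nlinarith [norm_nonneg (f - (orthogonalProjection K' f : H)), norm_nonneg (f - y)]
  nlinarith [hmin2, hexp]

lemma proj_nested {K K' : Submodule 𝕜 H} [HasOrthogonalProjection K]
    [HasOrthogonalProjection K'] (hle : K ≤ K') (f : H) :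
    ‖(orthogonalProjection K' f : H) - (orthogonalProjection K f : H)‖ ^ 2 =
      ‖(orthogonalProjection K' f : H)‖ ^ 2 - ‖(orthogonalProjection K f : H)‖ ^ 2 := by
  set a : H := (orthogonalProjection K f : H) with ha
  set b : H := (orthogonalProjection K' f : H) with hb
  have h1 : ⟪f - a, a⟫ = 0 :=
    Submodule.starProjection_inner_eq_zero f a (orthogonalProjection K f).2
  have h2 : ⟪f - b, a⟫ = 0 :=
    Submodule.starProjection_inner_eq_zero (K := K') f a (hle (orthogonalProjection K f).2)
  have h3 : ⟪b - a, a⟫ = 0 := by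
    have : ⟪(f - a) - (f - b), a⟫ = 0 := by rw [inner_sub_left, h1, h2, sub_zero]
    simpa using this
  have h4 : ⟪a, b - a⟫ = 0 := inner_eq_zero_symm.mp h3
  have h5 : b = a + (b - a) := by abel
  have h6 : ‖b‖ ^ 2 = ‖a‖ ^ 2 + 2 * RCLike.re ⟪a, b - a⟫ + ‖b - a‖ ^ 2 := by
    conv_lhs => rw [h5]
    exact @norm_add_sq 𝕜 _ _ _ _ _ _
  rw [h4] at h6
  simp at h6
  linarith

end Proj
section Rep

variable {𝕜 H : Type*} [RCLike 𝕜] [NormedAddCommGroup H] [InnerProductSpace 𝕜 H]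

local notation "⟪" x ", " y "⟫" => @inner 𝕜 _ _ x y

lemma rep_bound : ∀ (m : ℕ) (v : Fin m → H) (δ : ℝ), 0 < δ → (∀ j, ‖v j‖ ≤ 1) →
    SepFam 𝕜 v δ → ∀ x ∈ Submodule.span 𝕜 (Set.range v),
    ∃ c : Fin m → 𝕜, x = ∑ j, c j • v j ∧ ∀ j, ‖c j‖ ≤ ‖x‖ * (1 + δ⁻¹) ^ m * δ⁻¹ := by
  intro m
  induction m with
  | zero =>
    intro v δ hδ _ _ x hx
    have hr : Set.range v = (∅ : Set H) := Set.range_eq_empty v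
    rw [hr, Submodule.span_empty, Submodule.mem_bot] at hx
    exact ⟨fun j => 0, by simp [hx], fun j => j.elim0⟩
  | succ m ih =>
    intro v δ hδ hv1 hsep x hx
    obtain ⟨c₀, hc₀⟩ := (mem_span_range_iff_exists_fun 𝕜).mp hx
    set a : 𝕜 := c₀ (Fin.last m) with haa
    set y : H := ∑ i : Fin m, c₀ (Fin.castSucc i) • v (Fin.castSucc i) with hyy
    have hxy : x = y + a • v (Fin.last m) := by
      rw [← hc₀, Fin.sum_univ_castSucc]
    have hyspan : y ∈ Submodule.span 𝕜 (Set.range (v ∘ Fin.castSucc)) := by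
      apply Submodule.sum_mem
      intro i _
      exact Submodule.smul_mem _ _ (Submodule.subset_span ⟨i, rfl⟩)
    have hspan_eq : Submodule.span 𝕜 (Set.range (v ∘ Fin.castSucc)) =
        Submodule.span 𝕜 (v '' {k | k < Fin.last m}) := by
      rw [fin_image_lt_last_eq_range_comp]
    have hbase : (1 : ℝ) ≤ 1 + δ⁻¹ := by
      have := inv_nonneg.mpr hδ.le
      linarith
    have hbnd : (1 : ℝ) ≤ (1 + δ⁻¹) ^ (m + 1) := one_le_pow₀ hbase
    have hxnn : (0 : ℝ) ≤ ‖x‖ := norm_nonneg x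
    have hδinn : (0 : ℝ) ≤ δ⁻¹ := inv_nonneg.mpr hδ.le
    -- bound on the last coefficient
    have ha : ‖a‖ ≤ ‖x‖ * δ⁻¹ := by
      by_cases h0 : a = 0
      · simp [h0]; positivity
      · have hx_eq : x = a • (v (Fin.last m) + a⁻¹ • y) := by
          rw [smul_add, smul_smul, mul_inv_cancel₀ h0, one_smul, hxy]; abel
        have hwmem : -(a⁻¹ • y) ∈ Submodule.span 𝕜 (v '' {k | k < Fin.last m}) := by
          rw [← hspan_eq]
          exact Submodule.neg_mem _ (Submodule.smul_mem _ _ hyspan)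
        have hdist := hsep (Fin.last m) _ hwmem
        have heq : v (Fin.last m) - -(a⁻¹ • y) = v (Fin.last m) + a⁻¹ • y := by abel
        rw [heq] at hdist
        have : ‖x‖ = ‖a‖ * ‖v (Fin.last m) + a⁻¹ • y‖ := by rw [hx_eq, norm_smul]
        have haδ : ‖a‖ * δ ≤ ‖x‖ := by
          rw [this]
          exact mul_le_mul_of_nonneg_left hdist (norm_nonneg a)
        rw [← le_div_iff₀ hδ] at haδ
        rwa [div_eq_mul_inv] at haδ
    -- the prefix family
    have hsep' : SepFam 𝕜 (v ∘ Fin.castSucc) δ := by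
      intro j w hw
      rw [fin_comp_castSucc_image_lt] at hw
      exact hsep (Fin.castSucc j) w hw
    have hy_norm : ‖y‖ ≤ ‖x‖ * (1 + δ⁻¹) := by
      have : y = x - a • v (Fin.last m) := by rw [hxy]; abel
      rw [this]
      calc ‖x - a • v (Fin.last m)‖ ≤ ‖x‖ + ‖a • v (Fin.last m)‖ := norm_sub_le _ _
        _ ≤ ‖x‖ + ‖a‖ * 1 := by
            rw [norm_smul]
            exact add_le_add le_rfl (mul_le_mul_of_nonneg_left (hv1 _) (norm_nonneg a))
        _ ≤ ‖x‖ + ‖x‖ * δ⁻¹ * 1 := by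
            have := ha; nlinarith
        _ = ‖x‖ * (1 + δ⁻¹) := by ring
    obtain ⟨c', hc'eq, hc'bnd⟩ := ih (v ∘ Fin.castSucc) δ hδ (fun j => hv1 _) hsep' y hyspan
    refine ⟨Fin.snoc c' a, ?_, ?_⟩
    · rw [Fin.sum_univ_castSucc]
      have hterm : ∀ i : Fin m, (Fin.snoc c' a : Fin (m+1) → 𝕜) (Fin.castSucc i) • v (Fin.castSucc i)
          = c' i • (v ∘ Fin.castSucc) i := by
        intro i; rw [Fin.snoc_castSucc]; rfl
      rw [Finset.sum_congr rfl (fun i _ => hterm i)]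
      rw [← hc'eq]
      have : (Fin.snoc c' a : Fin (m+1) → 𝕜) (Fin.last m) = a := Fin.snoc_last _ _
      rw [this, hxy]
    · intro j
      refine Fin.lastCases ?_ ?_ j
      · have : (Fin.snoc c' a : Fin (m+1) → 𝕜) (Fin.last m) = a := Fin.snoc_last _ _
        rw [this]
        calc ‖a‖ ≤ ‖x‖ * δ⁻¹ := ha
          _ = ‖x‖ * 1 * δ⁻¹ := by ring
          _ ≤ ‖x‖ * (1 + δ⁻¹) ^ (m + 1) * δ⁻¹ := by
              apply mul_le_mul_of_nonneg_right _ hδinn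
              exact mul_le_mul_of_nonneg_left hbnd hxnn
      · intro i
        rw [Fin.snoc_castSucc]
        calc ‖c' i‖ ≤ ‖y‖ * (1 + δ⁻¹) ^ m * δ⁻¹ := hc'bnd i
          _ ≤ (‖x‖ * (1 + δ⁻¹)) * (1 + δ⁻¹) ^ m * δ⁻¹ := by
              apply mul_le_mul_of_nonneg_right _ hδinn
              apply mul_le_mul_of_nonneg_right hy_norm (by positivity)
          _ = ‖x‖ * (1 + δ⁻¹) ^ (m + 1) * δ⁻¹ := by ring

end Rep
section Epoch

variable {𝕜 H : Type*} [RCLike 𝕜] [NormedAddCommGroup H] [InnerProductSpace 𝕜 H]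

local notation "⟪" x ", " y "⟫" => @inner 𝕜 _ _ x y

lemma epoch {S : Set H} (hS : ∀ v ∈ S, ‖v‖ ≤ 1) {f : H} (hf : ‖f‖ ≤ 1) {δ : ℝ} (hδ : 0 < δ) :
    ∀ (k m : ℕ) (v : Fin m → H), (∀ j, v j ∈ S) → SepFam 𝕜 v δ →
    ‖f‖ ^ 2 - (k : ℝ) * δ ^ 2 ≤
      ‖(orthogonalProjection (Submodule.span 𝕜 (Set.range v)) f : H)‖ ^ 2 →
    ∃ (m' : ℕ) (hm : m ≤ m') (w : Fin m' → H),
      m' ≤ m + k ∧ (∀ j : Fin m, w (Fin.castLE hm j) = v j) ∧ (∀ j, w j ∈ S) ∧ SepFam 𝕜 w δ ∧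
      ∀ s ∈ S, ‖⟪f - (orthogonalProjection (Submodule.span 𝕜 (Set.range w)) f : H), s⟫‖ ≤ δ := by
  intro k
  induction k with
  | zero =>
    intro m v hvS hsep hE
    refine ⟨m, le_rfl, v, Nat.le_add_right _ _, fun j => congrArg v (Fin.ext rfl), hvS, hsep, ?_⟩
    intro s hs
    set K := Submodule.span 𝕜 (Set.range v)
    have hp := proj_norm_sq K f
    have hr2 : ‖f - (orthogonalProjection K f : H)‖ ^ 2 ≤ 0 := by
      push_cast at hE; nlinarith
    have hr0 : ‖f - (orthogonalProjection K f : H)‖ = 0 := by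
      nlinarith [norm_nonneg (f - (orthogonalProjection K f : H))]
    calc ‖⟪f - (orthogonalProjection K f : H), s⟫‖
        ≤ ‖f - (orthogonalProjection K f : H)‖ * ‖s‖ := norm_inner_le_norm _ _
      _ = 0 := by rw [hr0, zero_mul]
      _ ≤ δ := hδ.le
  | succ k ih =>
    intro m v hvS hsep hE
    set K := Submodule.span 𝕜 (Set.range v) with hK
    by_cases hpr : ∀ s ∈ S, ‖⟪f - (orthogonalProjection K f : H), s⟫‖ ≤ δ
    · exact ⟨m, le_rfl, v, Nat.le_add_right _ _, fun j => congrArg v (Fin.ext rfl), hvS, hsep, hpr⟩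
    · push_neg at hpr
      obtain ⟨v₀, hv₀S, hv₀⟩ := hpr
      set w₀ : Fin (m + 1) → H := Fin.snoc v v₀ with hw₀
      set K' := Submodule.span 𝕜 (Set.range w₀) with hK'
      have hsub : Set.range v ⊆ Set.range w₀ := by
        rintro _ ⟨j, rfl⟩
        exact ⟨Fin.castSucc j, Fin.snoc_castSucc _ _ _⟩
      have hle : K ≤ K' := Submodule.span_mono hsub
      have hv₀K' : v₀ ∈ K' :=
        Submodule.subset_span ⟨Fin.last m, Fin.snoc_last _ _⟩
      have hEinc := energy_increment (𝕜 := 𝕜) hle hv₀K' (hS v₀ hv₀S) hδ.le hv₀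
      have hE' : ‖f‖ ^ 2 - (k : ℝ) * δ ^ 2 ≤ ‖(orthogonalProjection K' f : H)‖ ^ 2 := by
        push_cast at hE ⊢; nlinarith
      have hw₀S : ∀ j, w₀ j ∈ S := by
        intro j
        refine Fin.lastCases ?_ ?_ j
        · rw [hw₀]; rw [Fin.snoc_last]; exact hv₀S
        · intro i; rw [hw₀]; rw [Fin.snoc_castSucc]; exact hvS i
      have hw₀sep : SepFam 𝕜 w₀ δ := by
        intro j
        refine Fin.lastCases ?_ ?_ j
        · intro w hw
          rw [hw₀, fin_snoc_image_lt_last] at hw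
          rw [hw₀, Fin.snoc_last]
          have horto : ⟪f - (orthogonalProjection K f : H), w⟫ = 0 :=
            Submodule.starProjection_inner_eq_zero f w hw
          have hsplit : ‖⟪f - (orthogonalProjection K f : H), v₀⟫‖
              = ‖⟪f - (orthogonalProjection K f : H), v₀ - w⟫‖ := by
            rw [inner_sub_right, horto, sub_zero]
          have hcs : ‖⟪f - (orthogonalProjection K f : H), v₀ - w⟫‖
              ≤ ‖f - (orthogonalProjection K f : H)‖ * ‖v₀ - w‖ := norm_inner_le_norm _ _
          have hu1 : ‖f - (orthogonalProjection K f : H)‖ ≤ 1 :=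
            (residual_norm_le K f).trans hf
          nlinarith [norm_nonneg (v₀ - w), norm_nonneg (f - (orthogonalProjection K f : H)),
            norm_nonneg (⟪f - (orthogonalProjection K f : H), v₀ - w⟫)]
        · intro i w hw
          rw [hw₀, fin_snoc_image_lt_castSucc] at hw
          rw [hw₀, Fin.snoc_castSucc]
          exact hsep i w hw
      obtain ⟨m', hm', w, hbnd, hext', hwS, hwsep, hwpr⟩ := ih (m + 1) w₀ hw₀S hw₀sep hE'
      refine ⟨m', (Nat.le_succ m).trans hm', w, by omega, ?_, hwS, hwsep, hwpr⟩
      intro j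
      have e1 : Fin.castLE hm' (Fin.castLE (Nat.le_succ m) j)
          = Fin.castLE ((Nat.le_succ m).trans hm') j := Fin.ext rfl
      calc w (Fin.castLE ((Nat.le_succ m).trans hm') j)
          = w (Fin.castLE hm' (Fin.castLE (Nat.le_succ m) j)) := by rw [e1]
        _ = w₀ (Fin.castLE (Nat.le_succ m) j) := hext' _
        _ = w₀ (Fin.castSucc j) := by congr 1
        _ = v j := by rw [hw₀]; exact Fin.snoc_castSucc _ _ _

end Epoch
section Params

/-- Parameter recursion for the strong regularity lemma: `regAux 𝓕 i = (M i, N i, δ i)`. -/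
noncomputable def regAux (𝓕 : ℕ → ℝ) : ℕ → ℕ × ℕ × ℝ
  | 0 => (1, 0, 2)
  | i + 1 =>
    let p := regAux 𝓕 i
    let δ' := min (1 / 𝓕 p.1) p.2.2
    let N' := p.2.1 + ⌈δ'⁻¹ ^ 2⌉₊
    (max (max N' ⌈(1 + δ'⁻¹) ^ N' * δ'⁻¹⌉₊) p.1, N', δ')

variable {𝓕 : ℕ → ℝ}

lemma regAux_succ_M (𝓕 : ℕ → ℝ) (i : ℕ) :
    (regAux 𝓕 (i + 1)).1 = max (max ((regAux 𝓕 (i + 1)).2.1)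
      ⌈(1 + ((regAux 𝓕 (i + 1)).2.2)⁻¹) ^ ((regAux 𝓕 (i + 1)).2.1) *
        ((regAux 𝓕 (i + 1)).2.2)⁻¹⌉₊) (regAux 𝓕 i).1 := rfl

lemma regAux_succ_N (𝓕 : ℕ → ℝ) (i : ℕ) :
    (regAux 𝓕 (i + 1)).2.1 = (regAux 𝓕 i).2.1 + ⌈((regAux 𝓕 (i + 1)).2.2)⁻¹ ^ 2⌉₊ := rfl

lemma regAux_succ_delta (𝓕 : ℕ → ℝ) (i : ℕ) :
    (regAux 𝓕 (i + 1)).2.2 = min (1 / 𝓕 ((regAux 𝓕 i).1)) ((regAux 𝓕 i).2.2) := rfl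

lemma regAux_basic (h𝓕 : ∀ n, 0 < n → 0 < 𝓕 n) :
    ∀ i, 1 ≤ (regAux 𝓕 i).1 ∧ 0 < (regAux 𝓕 i).2.2 := by
  intro i
  induction i with
  | zero => exact ⟨le_rfl, by norm_num [regAux]⟩
  | succ i ih =>
    refine ⟨(regAux_succ_M 𝓕 i) ▸ le_trans ih.1 (le_max_right _ _), ?_⟩
    rw [regAux_succ_delta]
    have hF : 0 < 𝓕 ((regAux 𝓕 i).1) := h𝓕 _ ih.1
    exact lt_min (by positivity) ih.2

lemma regAux_M_mono (𝓕 : ℕ → ℝ) : Monotone fun i => (regAux 𝓕 i).1 := by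
  apply monotone_nat_of_le_succ
  intro i
  exact (regAux_succ_M 𝓕 i) ▸ le_max_right _ _

lemma regAux_delta_antitone (𝓕 : ℕ → ℝ) (i : ℕ) :
    (regAux 𝓕 (i + 1)).2.2 ≤ (regAux 𝓕 i).2.2 := by
  rw [regAux_succ_delta]; exact min_le_right _ _

lemma regAux_delta_F (𝓕 : ℕ → ℝ) (i : ℕ) :
    (regAux 𝓕 (i + 1)).2.2 ≤ 1 / 𝓕 ((regAux 𝓕 i).1) := by
  rw [regAux_succ_delta]; exact min_le_left _ _

lemma regAux_N_le_M (𝓕 : ℕ → ℝ) : ∀ i, (regAux 𝓕 i).2.1 ≤ (regAux 𝓕 i).1 := by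
  intro i
  cases i with
  | zero => norm_num [regAux]
  | succ i => exact (regAux_succ_M 𝓕 i) ▸ le_trans (le_max_left _ _) (le_max_left _ _)

lemma regAux_coeff (𝓕 : ℕ → ℝ) : ∀ i,
    (1 + ((regAux 𝓕 i).2.2)⁻¹) ^ ((regAux 𝓕 i).2.1) * ((regAux 𝓕 i).2.2)⁻¹
      ≤ ((regAux 𝓕 i).1 : ℝ) := by
  intro i
  cases i with
  | zero => norm_num [regAux]
  | succ i =>
    calc (1 + ((regAux 𝓕 (i+1)).2.2)⁻¹) ^ ((regAux 𝓕 (i+1)).2.1) * ((regAux 𝓕 (i+1)).2.2)⁻¹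
        ≤ (⌈(1 + ((regAux 𝓕 (i+1)).2.2)⁻¹) ^ ((regAux 𝓕 (i+1)).2.1) *
            ((regAux 𝓕 (i+1)).2.2)⁻¹⌉₊ : ℝ) := Nat.le_ceil _
      _ ≤ ((regAux 𝓕 (i+1)).1 : ℝ) := by
          have h := (regAux_succ_M 𝓕 i) ▸ le_trans (le_max_right _ _)
            (le_max_left _ _ :
              max ((regAux 𝓕 (i+1)).2.1) ⌈(1 + ((regAux 𝓕 (i+1)).2.2)⁻¹) ^
                ((regAux 𝓕 (i+1)).2.1) * ((regAux 𝓕 (i+1)).2.2)⁻¹⌉₊ ≤ _)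
          exact_mod_cast h
end Params
/-- Strong regularity lemma (Tao): for every `ε > 0` and growth function `𝓕` there is
`M₀ = M₀(𝓕, ε)` such that every vector of norm at most `1` decomposes as an
`(M, M)`-structured part (for some positive `M ≤ M₀`), a part of norm at most `ε`,
and a `1/𝓕(M)`-pseudorandom part of no larger norm. -/
theorem strong_regularity_lemma {𝕜 H : Type*} [RCLike 𝕜] [NormedAddCommGroup H]
    [InnerProductSpace 𝕜 H] (S : Set H) (hS : ∀ v ∈ S, ‖v‖ ≤ 1)
    (ε : ℝ) (hε : 0 < ε) (𝓕 : ℕ → ℝ) (h𝓕 : ∀ n, 0 < n → 0 < 𝓕 n) :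
    ∃ M₀ : ℕ, ∀ f : H, ‖f‖ ≤ 1 →
      ∃ (M : ℕ) (fstr fpsd fsml : H),
        0 < M ∧ M ≤ M₀ ∧ f = fstr + fpsd + fsml ∧
        IsStructured (𝕜 := 𝕜) S M (M : ℝ) fstr ∧
        ‖fsml‖ ≤ ε ∧
        IsPseudorandom (𝕜 := 𝕜) S (1 / 𝓕 M) fpsd ∧
        ‖fpsd‖ ≤ ‖f‖ := by
  classical
  set T : ℕ := ⌈ε⁻¹ ^ 2⌉₊ + 1 with hT
  set Mf : ℕ → ℕ := fun i => (regAux 𝓕 i).1 with hMf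
  set Nf : ℕ → ℕ := fun i => (regAux 𝓕 i).2.1 with hNf
  set df : ℕ → ℝ := fun i => (regAux 𝓕 i).2.2 with hdf
  have hM1 : ∀ i, 1 ≤ Mf i := fun i => (regAux_basic h𝓕 i).1
  have hdpos : ∀ i, 0 < df i := fun i => (regAux_basic h𝓕 i).2
  refine ⟨Mf T, ?_⟩
  intro f hf
  have key : ∀ i, i ≤ T →
      (∃ (M : ℕ) (fstr fpsd fsml : H),
        0 < M ∧ M ≤ Mf T ∧ f = fstr + fpsd + fsml ∧
        IsStructured (𝕜 := 𝕜) S M (M : ℝ) fstr ∧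
        ‖fsml‖ ≤ ε ∧
        IsPseudorandom (𝕜 := 𝕜) S (1 / 𝓕 M) fpsd ∧
        ‖fpsd‖ ≤ ‖f‖) ∨
      (∃ (m : ℕ) (v : Fin m → H), m ≤ Nf i ∧ (∀ j, v j ∈ S) ∧ SepFam 𝕜 v (df i) ∧
        (i : ℝ) * ε ^ 2 ≤
          ‖(orthogonalProjection (Submodule.span 𝕜 (Set.range v)) f : H)‖ ^ 2) := by
    intro i
    induction i with
    | zero =>
      intro _
      refine Or.inr ⟨0, Fin.elim0, Nat.zero_le _, fun j => j.elim0, fun j => j.elim0, ?_⟩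
      simp
    | succ i ih =>
      intro hiT
      rcases ih (by omega) with hgoal | ⟨m, v, hmN, hvS, hvsep, hvE⟩
      · exact Or.inl hgoal
      · have hδpos : 0 < df (i + 1) := hdpos (i + 1)
        have hδle : df (i + 1) ≤ df i := regAux_delta_antitone 𝓕 i
        have hsep' : SepFam 𝕜 v (df (i + 1)) := hvsep.mono hδle
        have hone : (df (i+1))⁻¹ ^ 2 * (df (i+1)) ^ 2 = 1 := by
          rw [← mul_pow, inv_mul_cancel₀ hδpos.ne']
          norm_num
        have hk : ‖f‖ ^ 2 - ((⌈(df (i+1))⁻¹ ^ 2⌉₊ : ℝ)) * (df (i+1)) ^ 2 ≤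
            ‖(orthogonalProjection (Submodule.span 𝕜 (Set.range v)) f : H)‖ ^ 2 := by
          have h1 : ((df (i+1))⁻¹ ^ 2 : ℝ) ≤ (⌈(df (i+1))⁻¹ ^ 2⌉₊ : ℝ) := Nat.le_ceil _
          have h2 : ((df (i+1))⁻¹ ^ 2) * (df (i+1)) ^ 2 ≤
              ((⌈(df (i+1))⁻¹ ^ 2⌉₊ : ℝ)) * (df (i+1)) ^ 2 :=
            mul_le_mul_of_nonneg_right h1 (sq_nonneg _)
          have h3 : ‖f‖ ^ 2 ≤ 1 := by nlinarith [norm_nonneg f]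
          nlinarith [sq_nonneg ‖(orthogonalProjection (Submodule.span 𝕜 (Set.range v)) f : H)‖]
        obtain ⟨m', hm', w, hbnd, hext, hwS, hwsep, hwpr⟩ :=
          epoch (𝕜 := 𝕜) hS hf hδpos (⌈(df (i+1))⁻¹ ^ 2⌉₊) m v hvS hsep' hk
        have hleKK' : Submodule.span 𝕜 (Set.range v) ≤ Submodule.span 𝕜 (Set.range w) := by
          apply Submodule.span_mono
          rintro _ ⟨j, rfl⟩
          exact ⟨Fin.castLE hm' j, hext j⟩
        by_cases hgap : ‖(orthogonalProjection (Submodule.span 𝕜 (Set.range w)) f : H)‖ ^ 2 ≤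
            ‖(orthogonalProjection (Submodule.span 𝕜 (Set.range v)) f : H)‖ ^ 2 + ε ^ 2
        · left
          refine ⟨Mf i, (orthogonalProjection (Submodule.span 𝕜 (Set.range v)) f : H),
            f - (orthogonalProjection (Submodule.span 𝕜 (Set.range w)) f : H),
            (orthogonalProjection (Submodule.span 𝕜 (Set.range w)) f : H) -
              (orthogonalProjection (Submodule.span 𝕜 (Set.range v)) f : H),
            hM1 i, regAux_M_mono 𝓕 (by omega : i ≤ T), by abel, ?_, ?_, ?_, ?_⟩
          · -- structured
            obtain ⟨c, hceq, hcb⟩ := rep_bound m v (df i) (hdpos i) (fun j => hS _ (hvS j))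
              hvsep _ (orthogonalProjection (Submodule.span 𝕜 (Set.range v)) f).2
            refine ⟨m, c, v, hmN.trans (regAux_N_le_M 𝓕 i), hvS, ?_, hceq⟩
            intro j
            have hx1 : ‖(orthogonalProjection (Submodule.span 𝕜 (Set.range v)) f : H)‖ ≤ 1 :=
              (proj_norm_le _ f).trans hf
            have hbase : (1:ℝ) ≤ 1 + (df i)⁻¹ := by
              have := (inv_nonneg.mpr (hdpos i).le); linarith
            have hpow : (1 + (df i)⁻¹) ^ m ≤ (1 + (df i)⁻¹) ^ (Nf i) :=
              pow_le_pow_right₀ hbase hmN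
            have hcoeff := regAux_coeff 𝓕 i
            have hinv : (0:ℝ) ≤ (df i)⁻¹ := inv_nonneg.mpr (hdpos i).le
            calc ‖c j‖ ≤ ‖(orthogonalProjection (Submodule.span 𝕜 (Set.range v)) f : H)‖ *
                  (1 + (df i)⁻¹) ^ m * (df i)⁻¹ := hcb j
              _ ≤ 1 * (1 + (df i)⁻¹) ^ (Nf i) * (df i)⁻¹ := by
                  apply mul_le_mul_of_nonneg_right _ hinv
                  apply mul_le_mul hx1 hpow (by positivity) (by norm_num)
              _ = (1 + (df i)⁻¹) ^ (Nf i) * (df i)⁻¹ := by ring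
              _ ≤ (Mf i : ℝ) := hcoeff
          · -- small part
            have hnest := proj_nested (𝕜 := 𝕜) hleKK' f
            nlinarith [norm_nonneg ((orthogonalProjection (Submodule.span 𝕜 (Set.range w)) f : H) -
              (orthogonalProjection (Submodule.span 𝕜 (Set.range v)) f : H)), hε.le]
          · -- pseudorandom part
            intro s hs
            exact le_trans (hwpr s hs) (regAux_delta_F 𝓕 i)
          · exact residual_norm_le _ f
        · right
          refine ⟨m', w, ?_, hwS, hwsep, ?_⟩
          · have hNsucc : Nf (i + 1) = Nf i + ⌈(df (i + 1))⁻¹ ^ 2⌉₊ := regAux_succ_N 𝓕 i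
            omega
          · push_neg at hgap
            push_cast
            nlinarith [hvE]
  rcases key T le_rfl with hgoal | ⟨m, v, _, _, _, hE⟩
  · exact hgoal
  · exfalso
    have hE1 : ‖(orthogonalProjection (Submodule.span 𝕜 (Set.range v)) f : H)‖ ^ 2 ≤ 1 := by
      have h := (proj_norm_le (Submodule.span 𝕜 (Set.range v)) f).trans hf
      nlinarith [norm_nonneg (orthogonalProjection (Submodule.span 𝕜 (Set.range v)) f : H)]
    have hceil : (ε⁻¹ ^ 2 : ℝ) ≤ (⌈ε⁻¹ ^ 2⌉₊ : ℝ) := Nat.le_ceil _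
    have hTcast : ((T : ℕ) : ℝ) = (⌈ε⁻¹ ^ 2⌉₊ : ℝ) + 1 := by rw [hT]; push_cast; ring
    have hone : (ε⁻¹ ^ 2) * ε ^ 2 = 1 := by
      rw [← mul_pow, inv_mul_cancel₀ hε.ne']
      norm_num
    rw [hTcast] at hE
    nlinarith [mul_le_mul_of_nonneg_right hceil (sq_nonneg ε), sq_nonneg ε]
end

section
/- Pair-of-pairs double counting for dense families of additive quadruples (proved in Step 4 of Lemma 6.2 of the paper): Let D', N be positive integers, let δ ∈ (0,1], and let 𝒮 be a set of quadruples (h₁,h₂,h₃,h₄) ∈ ([N]^{D'})⁴ satisfying h₁ + h₂ = h₃ + h₄, with |𝒮| ≥ δ·N^{3D'}. Then there exist h₂, h₃, h₂', h₃' ∈ [N]^{D'} such that the set { h₁ ∈ [N]^{D'} : (h₁, h₂, h₃, h₁+h₂−h₃) ∈ 𝒮 and (h₁, h₂', h₃', h₁+h₂'−h₃') ∈ 𝒮 } has cardinality at least (δ³/8)·N^{D'}. -/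
open scoped BigOperators

/-- The discrete box `[N]^{D'} = {0, 1, …, N−1}^{D'} ⊆ ℤ^{D'}`. -/
noncomputable def intCube (N D' : ℕ) : Finset (Fin D' → ℤ) :=
  Fintype.piFinset fun _ => Finset.Ico (0 : ℤ) (N : ℤ)

open scoped Classical in
/-- Pair-of-pairs double counting for dense families of additive quadruples: if `𝒮` is a
family of additive quadruples in `([N]^{D'})⁴` of size at least `δ N^{3D'}`, then there
are pairs `(h₂, h₃)` and `(h₂', h₃')` such that at least `(δ³/8) N^{D'}` elements
`h₁ ∈ [N]^{D'}` extend both pairs to quadruples of `𝒮`. -/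
theorem pair_of_pairs_double_counting
    (D' N : ℕ) (hD' : 0 < D') (hN : 0 < N) (δ : ℝ) (hδ0 : 0 < δ) (hδ1 : δ ≤ 1)
    (𝒮 : Finset ((Fin D' → ℤ) × (Fin D' → ℤ) × (Fin D' → ℤ) × (Fin D' → ℤ)))
    (h𝒮cube : ∀ q ∈ 𝒮, q.1 ∈ intCube N D' ∧ q.2.1 ∈ intCube N D' ∧
      q.2.2.1 ∈ intCube N D' ∧ q.2.2.2 ∈ intCube N D')
    (h𝒮add : ∀ q ∈ 𝒮, q.1 + q.2.1 = q.2.2.1 + q.2.2.2)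
    (h𝒮card : δ * (N : ℝ) ^ (3 * D') ≤ (𝒮.card : ℝ)) :
    ∃ h₂ h₃ h₂' h₃' : Fin D' → ℤ,
      h₂ ∈ intCube N D' ∧ h₃ ∈ intCube N D' ∧ h₂' ∈ intCube N D' ∧ h₃' ∈ intCube N D' ∧
      δ ^ 3 / 8 * (N : ℝ) ^ D' ≤
        (((intCube N D').filter fun h₁ =>
            (h₁, h₂, h₃, h₁ + h₂ - h₃) ∈ 𝒮 ∧ (h₁, h₂', h₃', h₁ + h₂' - h₃') ∈ 𝒮).card : ℝ) := by
  classical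
  set B := intCube N D' with hB
  set M : ℝ := (N : ℝ) ^ D' with hM
  have hM0 : 0 < M := by positivity
  have hBcard : (B.card : ℝ) = M := by
    simp [hB, intCube, Fintype.card_piFinset, Int.toNat_natCast, hM]
  have hBne : B.Nonempty := by
    refine ⟨fun _ => 0, ?_⟩
    simp only [hB, intCube, Fintype.mem_piFinset]
    intro i
    simp only [Finset.mem_Ico, le_refl, true_and]
    exact_mod_cast hN
  -- indicator
  set ind : (Fin D' → ℤ) → ((Fin D' → ℤ) × (Fin D' → ℤ)) → ℝ :=
    fun h₁ p => if (h₁, p.1, p.2, h₁ + p.1 - p.2) ∈ 𝒮 then 1 else 0 with hind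
  set F : (Fin D' → ℤ) → ℝ := fun h₁ => ∑ p ∈ B ×ˢ B, ind h₁ p with hF
  have hFnn : ∀ h₁, 0 ≤ F h₁ := by
    intro h₁; apply Finset.sum_nonneg; intro p _; simp [hind]; positivity
  -- F as a card
  have hFcard : ∀ h₁, F h₁ =
      (((B ×ˢ B).filter fun p => (h₁, p.1, p.2, h₁ + p.1 - p.2) ∈ 𝒮).card : ℝ) := by
    intro h₁
    rw [Finset.card_filter]
    push_cast
    rfl
  -- total count equals |𝒮|
  have hsum : ∑ h₁ ∈ B, F h₁ = (𝒮.card : ℝ) := by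
    have h1 : ∑ h₁ ∈ B, F h₁ =
        (((B ×ˢ (B ×ˢ B)).filter fun t =>
          (t.1, t.2.1, t.2.2, t.1 + t.2.1 - t.2.2) ∈ 𝒮).card : ℝ) := by
      rw [Finset.card_filter]
      push_cast
      rw [Finset.sum_product]
    rw [h1]
    congr 1
    refine Finset.card_bij (fun t _ => (t.1, t.2.1, t.2.2, t.1 + t.2.1 - t.2.2)) ?_ ?_ ?_
    · intro t ht
      exact (Finset.mem_filter.mp ht).2
    · intro a ha b hb hab
      simp only [Prod.mk.injEq] at hab
      exact Prod.ext hab.1 (Prod.ext hab.2.1 hab.2.2.1)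
    · intro q hq
      refine ⟨(q.1, q.2.1, q.2.2.1), ?_, ?_⟩
      · rw [Finset.mem_filter]
        constructor
        · obtain ⟨c1, c2, c3, _⟩ := h𝒮cube q hq
          simp [Finset.mem_product]
          exact ⟨c1, c2, c3⟩
        · have h4 : q.1 + q.2.1 - q.2.2.1 = q.2.2.2 := by
            rw [h𝒮add q hq]; abel
          simpa [h4] using hq
      · have h4 : q.1 + q.2.1 - q.2.2.1 = q.2.2.2 := by
          rw [h𝒮add q hq]; abel
        simp [h4]
  -- lower bound on total count
  have hcube3 : δ * M ^ 3 ≤ ∑ h₁ ∈ B, F h₁ := by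
    rw [hsum]
    calc δ * M ^ 3 = δ * (N : ℝ) ^ (3 * D') := by rw [hM, ← pow_mul, Nat.mul_comm]
    _ ≤ _ := h𝒮card
  -- Cauchy–Schwarz
  have hCS : (∑ h₁ ∈ B, F h₁) ^ 2 ≤ M * ∑ h₁ ∈ B, F h₁ ^ 2 := by
    rw [← hBcard]
    exact sq_sum_le_card_mul_sum_sq
  have hsq : δ ^ 2 * M ^ 5 ≤ ∑ h₁ ∈ B, F h₁ ^ 2 := by
    have h1 : δ * M ^ 3 ≥ 0 := by positivity
    have h2 : (δ * M ^ 3) ^ 2 ≤ (∑ h₁ ∈ B, F h₁) ^ 2 := by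
      exact pow_le_pow_left₀ h1 hcube3 2
    nlinarith [hCS, hM0]
  -- definition of the pair-of-pairs count
  set g : ((Fin D' → ℤ) × (Fin D' → ℤ)) → ((Fin D' → ℤ) × (Fin D' → ℤ)) → ℝ :=
    fun p p' => ((B.filter fun h₁ =>
      (h₁, p.1, p.2, h₁ + p.1 - p.2) ∈ 𝒮 ∧ (h₁, p'.1, p'.2, h₁ + p'.1 - p'.2) ∈ 𝒮).card : ℝ)
    with hg
  have hexpand : ∑ h₁ ∈ B, F h₁ ^ 2 = ∑ p ∈ B ×ˢ B, ∑ p' ∈ B ×ˢ B, g p p' := by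
    have key : ∀ h₁, F h₁ ^ 2 = ∑ p ∈ B ×ˢ B, ∑ p' ∈ B ×ˢ B,
        (if (h₁, p.1, p.2, h₁ + p.1 - p.2) ∈ 𝒮 ∧ (h₁, p'.1, p'.2, h₁ + p'.1 - p'.2) ∈ 𝒮
          then (1 : ℝ) else 0) := by
      intro h₁
      rw [sq, hF, Finset.sum_mul_sum]
      refine Finset.sum_congr rfl fun p _ => Finset.sum_congr rfl fun p' _ => ?_
      simp only [hind]
      rcases em ((h₁, p.1, p.2, h₁ + p.1 - p.2) ∈ 𝒮) with hA | hA <;>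
        rcases em ((h₁, p'.1, p'.2, h₁ + p'.1 - p'.2) ∈ 𝒮) with hB | hB <;>
          simp [hA, hB]
    rw [Finset.sum_congr rfl fun h₁ _ => key h₁, Finset.sum_comm]
    refine Finset.sum_congr rfl fun p _ => ?_
    rw [Finset.sum_comm]
    refine Finset.sum_congr rfl fun p' _ => ?_
    simp only [hg, Finset.card_filter]
    push_cast
    rfl
  -- conclude by averaging
  by_contra hcon
  push_neg at hcon
  have hlt : ∀ p ∈ B ×ˢ B, ∀ p' ∈ B ×ˢ B, g p p' < δ ^ 3 / 8 * M := by
    rintro ⟨h₂, h₃⟩ hp ⟨h₂', h₃'⟩ hp'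
    rw [Finset.mem_product] at hp hp'
    exact hcon h₂ h₃ h₂' h₃' hp.1 hp.2 hp'.1 hp'.2
  have hsumlt : ∑ p ∈ B ×ˢ B, ∑ p' ∈ B ×ˢ B, g p p' < M ^ 2 * (M ^ 2 * (δ ^ 3 / 8 * M)) := by
    have hprodcard : (((B ×ˢ B).card : ℝ)) = M ^ 2 := by
      rw [Finset.card_product]; push_cast; rw [hBcard]; ring
    have hne : (B ×ˢ B).Nonempty := hBne.product hBne
    calc ∑ p ∈ B ×ˢ B, ∑ p' ∈ B ×ˢ B, g p p'
        < ∑ p ∈ B ×ˢ B, (M ^ 2 * (δ ^ 3 / 8 * M)) := by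
          apply Finset.sum_lt_sum_of_nonempty hne
          intro p hp
          calc ∑ p' ∈ B ×ˢ B, g p p'
              < ∑ _p' ∈ B ×ˢ B, (δ ^ 3 / 8 * M) :=
                Finset.sum_lt_sum_of_nonempty hne (hlt p hp)
            _ = M ^ 2 * (δ ^ 3 / 8 * M) := by
                rw [Finset.sum_const, nsmul_eq_mul, hprodcard]
      _ = M ^ 2 * (M ^ 2 * (δ ^ 3 / 8 * M)) := by
          rw [Finset.sum_const, nsmul_eq_mul, hprodcard]
  rw [hexpand] at hsq
  have h1 : M ^ 2 * (M ^ 2 * (δ ^ 3 / 8 * M)) = δ ^ 3 / 8 * M ^ 5 := by ring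
  rw [h1] at hsumlt
  have h2 : δ ^ 3 ≤ δ ^ 2 := pow_le_pow_of_le_one hδ0.le hδ1 (by norm_num)
  have h3 : δ ^ 3 * M ^ 5 ≤ δ ^ 2 * M ^ 5 :=
    mul_le_mul_of_nonneg_right h2 (le_of_lt (pow_pos hM0 5))
  have h4 : 0 < δ ^ 2 * M ^ 5 := by positivity
  linarith
end
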